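/- arXiv:1810.01010 — 3 statements merged into one kernel-verified Lean document; each statement's English description precedes it below -/
import Mathlib

section
/- Let Ω be an open subset of ℝ^n (with the Euclidean inner product), let u : Ω → ℝ be twice continuously differentiable, and suppose the function x ↦ u(x)² + ‖∇u(x)‖² attains a local maximum at a point x₀ ∈ Ω. If the symmetric bilinear form ξ ↦ u(x₀)‖ξ‖² + D²u(x₀)[ξ, ξ] is positive definite, then ∇u(x₀) = 0. -/
open InnerProductSpace

/-- If `u` is `C²` on an open set `Ω ⊆ ℝⁿ`, the function `u² + ‖∇u‖²` has a local
maximum at `x₀ ∈ Ω`, and the bilinear form `ξ ↦ u(x₀)‖ξ‖² + D²u(x₀)[ξ,ξ]` is positive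
definite, then `∇u(x₀) = 0`. -/
theorem stmt6 (n : ℕ) (Ω : Set (EuclideanSpace ℝ (Fin n))) (hΩ : IsOpen Ω)
    (u : EuclideanSpace ℝ (Fin n) → ℝ) (hu : ContDiffOn ℝ 2 u Ω)
    (x₀ : EuclideanSpace ℝ (Fin n)) (hx₀ : x₀ ∈ Ω)
    (hmax : IsLocalMax (fun x => u x ^ 2 + ‖gradient u x‖ ^ 2) x₀)
    (hpd : ∀ ξ : EuclideanSpace ℝ (Fin n), ξ ≠ 0 →
      0 < u x₀ * ‖ξ‖ ^ 2 + iteratedFDeriv ℝ 2 u x₀ ![ξ, ξ]) :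
    gradient u x₀ = 0 := by
  classical
  by_contra hne
  have hca : ContDiffAt ℝ 2 u x₀ := hu.contDiffAt (hΩ.mem_nhds hx₀)
  have hdu : DifferentiableAt ℝ u x₀ := hca.differentiableAt (by norm_num)
  have hcf : ContDiffAt ℝ 1 (fderiv ℝ u) x₀ := hca.fderiv_right (by norm_num)
  have hdf : DifferentiableAt ℝ (fderiv ℝ u) x₀ := hcf.differentiableAt one_ne_zero
  set e : (EuclideanSpace ℝ (Fin n) →L[ℝ] ℝ) →L[ℝ] EuclideanSpace ℝ (Fin n) :=
    ((InnerProductSpace.toDual ℝ (EuclideanSpace ℝ (Fin n))).symm.toContinuousLinearEquiv :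
      (EuclideanSpace ℝ (Fin n) →L[ℝ] ℝ) ≃L[ℝ] EuclideanSpace ℝ (Fin n)).toContinuousLinearMap
    with he
  have hge : gradient u = fun x => e (fderiv ℝ u x) := rfl
  set H : EuclideanSpace ℝ (Fin n) →L[ℝ] EuclideanSpace ℝ (Fin n) →L[ℝ] ℝ :=
    fderiv ℝ (fderiv ℝ u) x₀ with hH
  have hgd : HasFDerivAt (gradient u) (e.comp H) x₀ := by
    rw [hge]
    exact (e.hasFDerivAt.comp x₀ hdf.hasFDerivAt : _)
  have hdg : DifferentiableAt ℝ (gradient u) x₀ := hgd.differentiableAt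
  set ξ : EuclideanSpace ℝ (Fin n) := gradient u x₀ with hξ
  have hinner : ∀ η : EuclideanSpace ℝ (Fin n), fderiv ℝ u x₀ η = ⟪ξ, η⟫_ℝ := fun η =>
    (InnerProductSpace.toDual_symm_apply (𝕜 := ℝ)).symm
  have hinner2 : ∀ η η' : EuclideanSpace ℝ (Fin n),
      ⟪fderiv ℝ (gradient u) x₀ η, η'⟫_ℝ = H η η' := by
    intro η η'
    rw [hgd.fderiv]
    exact InnerProductSpace.toDual_symm_apply (𝕜 := ℝ)
  have h0 : fderiv ℝ (fun x => u x ^ 2 + ‖gradient u x‖ ^ 2) x₀ = 0 :=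
    hmax.fderiv_eq_zero
  have hrw : (fun x => u x ^ 2 + ‖gradient u x‖ ^ 2) =
      fun x => u x * u x + ⟪gradient u x, gradient u x⟫_ℝ := by
    funext x
    rw [real_inner_self_eq_norm_sq, sq]
  rw [hrw] at h0
  have hdin : DifferentiableAt ℝ (fun x => ⟪gradient u x, gradient u x⟫_ℝ) x₀ :=
    hdg.inner ℝ hdg
  have hval : (0 : ℝ) =
      (u x₀ * fderiv ℝ u x₀ ξ + u x₀ * fderiv ℝ u x₀ ξ) +
      (⟪ξ, fderiv ℝ (gradient u) x₀ ξ⟫_ℝ + ⟪fderiv ℝ (gradient u) x₀ ξ, ξ⟫_ℝ) := by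
    have hadd := fderiv_add (𝕜 := ℝ) (hdu.mul hdu) hdin
    have happ := congrArg (fun φ : EuclideanSpace ℝ (Fin n) →L[ℝ] ℝ => φ ξ)
      (h0 ▸ hadd.symm)
    simp only [ContinuousLinearMap.add_apply, ContinuousLinearMap.zero_apply] at happ
    rw [fderiv_inner_apply ℝ hdg hdg ξ, (hdu.hasFDerivAt.mul hdu.hasFDerivAt).fderiv] at happ
    simp only [ContinuousLinearMap.add_apply, ContinuousLinearMap.smul_apply,
      smul_eq_mul] at happ
    rw [← hξ] at happ
    linarith [happ]
  have hHval : H ξ ξ = iteratedFDeriv ℝ 2 u x₀ ![ξ, ξ] := by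
    rw [iteratedFDeriv_two_apply]
    simp [hH]
  have h1 : ⟪ξ, fderiv ℝ (gradient u) x₀ ξ⟫_ℝ = H ξ ξ := by
    rw [real_inner_comm]; exact hinner2 ξ ξ
  have h2 : ⟪fderiv ℝ (gradient u) x₀ ξ, ξ⟫_ℝ = H ξ ξ := hinner2 ξ ξ
  have h3 : fderiv ℝ u x₀ ξ = ‖ξ‖ ^ 2 := by
    rw [hinner ξ, real_inner_self_eq_norm_sq]
  rw [h1, h2, h3, hHval] at hval
  have hp := hpd ξ hne
  linarith
end

section
/- Let Ω be a bounded open subset of ℝ^n, and let u : cl(Ω) → ℝ be continuously differentiable on the closure of Ω and twice continuously differentiable in Ω, such that at every x ∈ Ω the symmetric bilinear form ξ ↦ u(x)‖ξ‖² + D²u(x)[ξ, ξ] is positive definite. Then sup over cl(Ω) of (u² + ‖∇u‖²) is at most the maximum of: sup over ∂Ω of (u² + ‖∇u‖²), and sup over cl(Ω) of u². -/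
open scoped Topology
open InnerProductSpace

lemma le_biSup_real {α : Type*} {s : Set α} {f : α → ℝ} {a : α} (ha : a ∈ s) {B : ℝ}
    (hB : ∀ x ∈ s, f x ≤ B) : f a ≤ ⨆ x ∈ s, f x := by
  have hbdd : BddAbove (Set.range fun x => ⨆ _ : x ∈ s, f x) := by
    refine ⟨max B 0, ?_⟩
    rintro y ⟨x, rfl⟩
    exact Real.iSup_le (fun hx => le_max_of_le_left (hB x hx)) (le_max_right _ _)
  calc f a = ⨆ _ : a ∈ s, f a := (ciSup_pos (f := fun _ => f a) ha).symm
    _ ≤ ⨆ x ∈ s, f x := le_ciSup hbdd a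

/-- Interior gradient estimate: let `Ω ⊆ ℝⁿ` be bounded and open, let `u` be continuously
differentiable on `cl(Ω)` (with gradient `g`, continuous on `cl(Ω)`) and `C²` in `Ω`, and
suppose `u·Id + Hess u` is positive definite at every point of `Ω`. Then the supremum of
`u² + ‖∇u‖²` over `cl(Ω)` is at most the maximum of its supremum over `∂Ω` and the
supremum of `u²` over `cl(Ω)`. -/
theorem stmt7 (n : ℕ) (Ω : Set (EuclideanSpace ℝ (Fin n))) (hΩ : IsOpen Ω)
    (hbd : Bornology.IsBounded Ω)
    (u : EuclideanSpace ℝ (Fin n) → ℝ)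
    (g : EuclideanSpace ℝ (Fin n) → EuclideanSpace ℝ (Fin n))
    (hg : ∀ x ∈ closure Ω, HasGradientWithinAt u (g x) (closure Ω) x)
    (hgc : ContinuousOn g (closure Ω))
    (hu2 : ContDiffOn ℝ 2 u Ω)
    (hpd : ∀ x ∈ Ω, ∀ ξ : EuclideanSpace ℝ (Fin n), ξ ≠ 0 →
      0 < u x * ‖ξ‖ ^ 2 + iteratedFDeriv ℝ 2 u x ![ξ, ξ]) :
    (⨆ x ∈ closure Ω, (u x ^ 2 + ‖g x‖ ^ 2)) ≤
      max (⨆ x ∈ frontier Ω, (u x ^ 2 + ‖g x‖ ^ 2)) (⨆ x ∈ closure Ω, u x ^ 2) := by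
  set w : EuclideanSpace ℝ (Fin n) → ℝ := fun x => u x ^ 2 + ‖g x‖ ^ 2 with hw
  have hRHS0 : (0:ℝ) ≤ ⨆ x ∈ closure Ω, u x ^ 2 :=
    Real.iSup_nonneg fun x => Real.iSup_nonneg fun _ => sq_nonneg _
  rcases (closure Ω).eq_empty_or_nonempty with hK | hK
  · have : (⨆ x ∈ closure Ω, w x) ≤ 0 := by
      refine Real.iSup_le (fun x => ?_) le_rfl
      refine Real.iSup_le (fun hx => ?_) le_rfl
      rw [hK] at hx; exact absurd hx (Set.notMem_empty x)
    exact this.trans (le_max_of_le_right hRHS0)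
  have hKc : IsCompact (closure Ω) := hbd.isCompact_closure
  have huc : ContinuousOn u (closure Ω) := fun x hx =>
    (hg x hx).hasFDerivWithinAt.continuousWithinAt
  have hwc : ContinuousOn w (closure Ω) := (huc.pow 2).add ((hgc.norm).pow 2)
  obtain ⟨x₀, hx₀K, hmax⟩ := hKc.exists_isMaxOn hK hwc
  have h0 : (0:ℝ) ≤ w x₀ := by positivity
  have hLHS : (⨆ x ∈ closure Ω, w x) ≤ w x₀ :=
    Real.iSup_le (fun x => Real.iSup_le (fun hx => hmax hx) h0) h0
  refine hLHS.trans ?_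
  by_cases hx₀ : x₀ ∈ Ω
  · -- interior case: show g x₀ = 0
    have hΩn : Ω ∈ 𝓝 x₀ := hΩ.mem_nhds hx₀
    -- on Ω, g agrees with toDual.symm ∘ fderiv u
    have hfd : ∀ x ∈ Ω, HasFDerivAt u (toDual ℝ _ (g x)) x := fun x hx =>
      ((hg x (subset_closure hx)).hasFDerivWithinAt).hasFDerivAt
        (Filter.mem_of_superset (hΩ.mem_nhds hx) subset_closure)
    have hgeq : ∀ x ∈ Ω, g x = (toDual ℝ _).symm (fderiv ℝ u x) := by
      intro x hx
      rw [(hfd x hx).fderiv]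
      simp
    have hcd : ContDiffAt ℝ 2 u x₀ := hu2.contDiffAt hΩn
    have hF : DifferentiableAt ℝ (fderiv ℝ u) x₀ :=
      (hcd.fderiv_right (by norm_num : (1:WithTop ℕ∞) + 1 ≤ 2)).differentiableAt one_ne_zero
    set ι := (toDual ℝ (EuclideanSpace ℝ (Fin n))).symm with hι
    set ιL : (EuclideanSpace ℝ (Fin n) →L[ℝ] ℝ) →L[ℝ] EuclideanSpace ℝ (Fin n) :=
      ι.toContinuousLinearEquiv.toContinuousLinearMap with hιL
    set F' := fderiv ℝ (fderiv ℝ u) x₀ with hF'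
    have hG : HasFDerivAt (fun x => ι (fderiv ℝ u x)) (ιL.comp F') x₀ :=
      ιL.hasFDerivAt.comp x₀ hF.hasFDerivAt
    have hGsq : HasFDerivAt (fun x => ‖ι (fderiv ℝ u x)‖ ^ 2)
        (2 • (innerSL ℝ (ι (fderiv ℝ u x₀))).comp (ιL.comp F')) x₀ := hG.norm_sq
    have hu1 : HasFDerivAt (fun x => u x ^ 2)
        (u x₀ • toDual ℝ _ (g x₀) + u x₀ • toDual ℝ _ (g x₀)) x₀ := by
      simp only [pow_two]
      exact (hfd x₀ hx₀).mul (hfd x₀ hx₀)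
    have hwt : HasFDerivAt w
        ((u x₀ • toDual ℝ _ (g x₀) + u x₀ • toDual ℝ _ (g x₀)) +
          2 • (innerSL ℝ (ι (fderiv ℝ u x₀))).comp (ιL.comp F')) x₀ := by
      refine (hu1.add hGsq).congr_of_eventuallyEq ?_
      filter_upwards [hΩn] with x hx
      rw [hw]
      simp only [hgeq x hx, Pi.add_apply]
    have hloc : IsLocalMax w x₀ :=
      hmax.isLocalMax (Filter.mem_of_superset hΩn subset_closure)
    have hD0 := hloc.hasFDerivAt_eq_zero hwt
    have hkey : u x₀ * ‖g x₀‖ ^ 2 + iteratedFDeriv ℝ 2 u x₀ ![g x₀, g x₀] = 0 := by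
      have heval := DFunLike.congr_fun hD0 (g x₀)
      have hg0 : g x₀ = ι (fderiv ℝ u x₀) := hgeq x₀ hx₀
      have hinner : (inner ℝ (ι (fderiv ℝ u x₀)) (ιL (F' (g x₀))) : ℝ)
          = F' (g x₀) (g x₀) := by
        rw [← hg0, hιL]
        simp only [LinearIsometryEquiv.coe_toContinuousLinearEquiv,
          ContinuousLinearEquiv.coe_coe]
        rw [real_inner_comm, hι, toDual_symm_apply]
      have hself : (inner ℝ (g x₀) (g x₀) : ℝ) = ‖g x₀‖ ^ 2 :=
        real_inner_self_eq_norm_sq _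
      simp only [ContinuousLinearMap.add_apply, ContinuousLinearMap.smul_apply,
        smul_eq_mul, toDual_apply_apply, two_smul, ContinuousLinearMap.zero_apply,
        ContinuousLinearMap.coe_comp', Function.comp_apply, innerSL_apply_apply] at heval
      rw [iteratedFDeriv_two_apply]
      simp only [Matrix.cons_val_zero, Matrix.cons_val_one, Matrix.head_cons]
      rw [hself, hinner] at heval
      linarith
    by_cases hgz : g x₀ = 0
    · have hwx : w x₀ = u x₀ ^ 2 := by simp [hw, hgz]
      have hub : ∀ x ∈ closure Ω, u x ^ 2 ≤ w x₀ := fun x hx =>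
        le_trans (le_add_of_nonneg_right (sq_nonneg ‖g x‖)) (hmax hx)
      calc w x₀ = u x₀ ^ 2 := hwx
        _ ≤ ⨆ x ∈ closure Ω, u x ^ 2 := le_biSup_real hx₀K hub
        _ ≤ _ := le_max_right _ _
    · exact absurd hkey (ne_of_gt (hpd x₀ hx₀ (g x₀) hgz))
  · have hfr : x₀ ∈ frontier Ω := hΩ.frontier_eq ▸ ⟨hx₀K, hx₀⟩
    exact le_max_of_le_left
      (le_biSup_real hfr fun x hx => hmax (frontier_subset_closure hx))
end

section
/- Let A be a real symmetric n×n matrix all of whose eigenvalues are at least λ₀, with λ₀ > 0, let b ∈ ℝ^n, c ≥ 0, and 1 ≤ k ≤ n. Then the k-th elementary symmetric polynomial of the eigenvalues of A + c b bᵀ is at least e_k(λ₀, λ₀, …, λ₀, λ₀ + c‖b‖²), the k-th elementary symmetric polynomial of the n-tuple consisting of n−1 copies of λ₀ and one copy of λ₀ + c‖b‖². -/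
open Matrix

/-- The `k`-th (unnormalized) elementary symmetric polynomial of `x : Fin n → ℝ`. -/
noncomputable def esymm (n k : ℕ) (x : Fin n → ℝ) : ℝ :=
  ∑ t ∈ Finset.univ.powersetCard k, ∏ i ∈ t, x i

lemma filterCard (n k : ℕ) (j : Fin n) :
    (((Finset.univ : Finset (Fin n)).powersetCard (k+1)).filter (fun S => j ∈ S)).card
      = (n-1).choose k := by
  have h : (((Finset.univ : Finset (Fin n)).powersetCard (k+1)).filter (fun S => j ∈ S)).card
      = (((Finset.univ : Finset (Fin n)).erase j).powersetCard k).card := by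
    refine Finset.card_bij' (fun S _ => S.erase j) (fun T _ => insert j T) ?_ ?_ ?_ ?_
    · intro S hS
      simp only [Finset.mem_filter, Finset.mem_powersetCard] at hS
      obtain ⟨⟨-, hc⟩, hj⟩ := hS
      simp only [Finset.mem_powersetCard]
      exact ⟨Finset.erase_subset_erase j (Finset.subset_univ S),
        by rw [Finset.card_erase_of_mem hj, hc]; omega⟩
    · intro T hT
      simp only [Finset.mem_powersetCard] at hT
      obtain ⟨hsub, hc⟩ := hT
      have hjT : j ∉ T := fun h => (Finset.mem_erase.mp (hsub h)).1 rfl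
      simp only [Finset.mem_filter, Finset.mem_powersetCard]
      exact ⟨⟨Finset.subset_univ _, by rw [Finset.card_insert_of_notMem hjT, hc]⟩,
        Finset.mem_insert_self _ _⟩
    · intro S hS
      simp only [Finset.mem_filter] at hS
      exact Finset.insert_erase hS.2
    · intro T hT
      simp only [Finset.mem_powersetCard] at hT
      have hjT : j ∉ T := fun h => (Finset.mem_erase.mp (hT.1 h)).1 rfl
      exact Finset.erase_insert hjT
  rw [h, Finset.card_powersetCard, Finset.card_erase_of_mem (Finset.mem_univ j),
    Finset.card_univ, Fintype.card_fin]

lemma traceEqSum (n : ℕ) (M : Matrix (Fin n) (Fin n) ℝ) (hM : M.IsHermitian) :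
    M.trace = ∑ i, hM.eigenvalues i := by
  conv_lhs => rw [hM.spectral_theorem, Unitary.conjStarAlgAut_apply]
  rw [Matrix.trace_mul_cycle,
    show (star (hM.eigenvectorUnitary : Matrix (Fin n) (Fin n) ℝ)) *
      (hM.eigenvectorUnitary : Matrix (Fin n) (Fin n) ℝ) = 1 from
        Matrix.mem_unitaryGroup_iff'.mp hM.eigenvectorUnitary.2, one_mul,
    Matrix.trace_diagonal]
  simp

lemma prodLower {n : ℕ} (lam : ℝ) (hlam : 0 < lam) (x : Fin n → ℝ) (hx : ∀ i, lam ≤ x i)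
    (S : Finset (Fin n)) :
    lam ^ S.card * lam + lam ^ S.card * (∑ i ∈ S, (x i - lam)) ≤ lam * ∏ i ∈ S, x i := by
  induction S using Finset.induction with
  | empty => simp
  | insert a S ha IH =>
    rw [Finset.prod_insert ha, Finset.sum_insert ha, Finset.card_insert_of_notMem ha]
    have hT : 0 ≤ ∑ i ∈ S, (x i - lam) := Finset.sum_nonneg fun i _ => sub_nonneg.2 (hx i)
    have hxa := hx a
    have hP : 0 < lam ^ S.card := pow_pos hlam _
    have h1 : x a * (lam ^ S.card * lam + lam ^ S.card * (∑ i ∈ S, (x i - lam)))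
        ≤ x a * (lam * ∏ i ∈ S, x i) :=
      mul_le_mul_of_nonneg_left IH (le_trans hlam.le hxa)
    rw [pow_succ]
    nlinarith [mul_nonneg (sub_nonneg.2 hxa) (mul_nonneg hP.le hT)]


/-- If `A` is real symmetric with all eigenvalues `≥ λ₀ > 0`, `c ≥ 0` and `1 ≤ k ≤ n`,
then the `k`-th elementary symmetric polynomial of the eigenvalues of `A + c b bᵀ` is at
least `e_k(λ₀, …, λ₀, λ₀ + c‖b‖²)` (with `n − 1` copies of `λ₀`). -/
theorem stmt10 (n k : ℕ) (hk1 : 1 ≤ k) (hkn : k ≤ n)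
    (A : Matrix (Fin n) (Fin n) ℝ) (hA : A.IsHermitian)
    (lam : ℝ) (hlam : 0 < lam) (heig : ∀ i, lam ≤ hA.eigenvalues i)
    (b : Fin n → ℝ) (c : ℝ) (hc : 0 ≤ c)
    (hB : (A + c • Matrix.vecMulVec b b).IsHermitian) :
    esymm n k (fun i => if (i : ℕ) = n - 1 then lam + c * (∑ j, b j ^ 2) else lam)
      ≤ esymm n k hB.eigenvalues := by
  obtain ⟨m, rfl⟩ : ∃ m, k = m + 1 := ⟨k - 1, by omega⟩
  have hn : 1 ≤ n := le_trans hk1 hkn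
  set s : ℝ := c * (∑ j, b j ^ 2) with hs_def
  have hs : 0 ≤ s := mul_nonneg hc (Finset.sum_nonneg fun j _ => sq_nonneg _)
  set j0 : Fin n := ⟨n - 1, by omega⟩ with hj0
  -- Positive semidefiniteness of the rank-one part
  have hM : (c • Matrix.vecMulVec b b).IsHermitian := by
    ext i j
    simp only [conjTranspose_apply, Matrix.smul_apply, vecMulVec_apply, star_trivial, smul_eq_mul]
    ring
  have hMpsd : (c • Matrix.vecMulVec b b).PosSemidef := by
    refine Matrix.PosSemidef.of_dotProduct_mulVec_nonneg hM fun x => ?_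
    have hqe : dotProduct (star x) ((c • Matrix.vecMulVec b b) *ᵥ x)
        = c * (∑ i, b i * x i) ^ 2 := by
      rw [pow_two, Finset.sum_mul_sum]
      simp only [dotProduct, Matrix.mulVec, Matrix.smul_apply, Matrix.vecMulVec_apply,
        star_trivial, smul_eq_mul, Finset.mul_sum]
      refine Finset.sum_congr rfl fun i _ => ?_
      refine Finset.sum_congr rfl fun l _ => ?_
      ring
    rw [hqe]
    positivity
  -- Positive semidefiniteness of A - lam • 1
  have hU1 : (hA.eigenvectorUnitary : Matrix (Fin n) (Fin n) ℝ)
      * star (hA.eigenvectorUnitary : Matrix (Fin n) (Fin n) ℝ) = 1 :=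
    Matrix.mem_unitaryGroup_iff.mp hA.eigenvectorUnitary.2
  have key : A - lam • 1 = (hA.eigenvectorUnitary : Matrix (Fin n) (Fin n) ℝ)
      * Matrix.diagonal (fun i => hA.eigenvalues i - lam)
      * star (hA.eigenvectorUnitary : Matrix (Fin n) (Fin n) ℝ) := by
    have h1 : Matrix.diagonal (fun i => hA.eigenvalues i - lam)
        = Matrix.diagonal (RCLike.ofReal ∘ hA.eigenvalues) - lam • (1 : Matrix (Fin n) (Fin n) ℝ) := by
      ext i j
      by_cases h : i = j <;>
        simp [Matrix.diagonal_apply, Matrix.one_apply, h]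
    rw [h1, Matrix.mul_sub, Matrix.sub_mul]
    conv_lhs => rw [hA.spectral_theorem, Unitary.conjStarAlgAut_apply]
    congr 1
    rw [mul_smul_comm, mul_one, smul_mul_assoc, hU1]
  have hApsd : (A - lam • 1).PosSemidef := by
    rw [key]
    exact (Matrix.PosSemidef.diagonal (fun i => sub_nonneg.2 (heig i))).mul_mul_conjTranspose_same _
  have hBpsd : (A + c • Matrix.vecMulVec b b - lam • 1).PosSemidef := by
    have h := hApsd.add hMpsd
    have he : A - lam • 1 + c • Matrix.vecMulVec b b
        = A + c • Matrix.vecMulVec b b - lam • 1 := by abel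
    rwa [he] at h
  -- eigenvalues of B are at least lam
  have hmu : ∀ i, lam ≤ hB.eigenvalues i := by
    intro i
    have hval := hB.eigenvalues_eq i
    set v : Fin n → ℝ := ⇑(hB.eigenvectorBasis i) with hv
    have hq := hBpsd.dotProduct_mulVec_nonneg v
    have hv1 : dotProduct (star v) v = 1 := by
      have h2 : (inner ℝ (hB.eigenvectorBasis i) (hB.eigenvectorBasis i) : ℝ) = 1 := by
        rw [real_inner_self_eq_norm_mul_norm, hB.eigenvectorBasis.orthonormal.1 i]
        norm_num
      rw [EuclideanSpace.inner_eq_star_dotProduct] at h2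
      simpa using h2
    have hexp : dotProduct (star v) ((A + c • Matrix.vecMulVec b b - lam • 1) *ᵥ v)
        = dotProduct (star v) ((A + c • Matrix.vecMulVec b b) *ᵥ v) - lam := by
      rw [Matrix.sub_mulVec, dotProduct_sub]
      congr 1
      rw [Matrix.smul_mulVec, Matrix.one_mulVec, dotProduct_smul, hv1]
      simp
    simp only [RCLike.re_to_real] at hval
    rw [hval]
    have := hq
    rw [hexp] at this
    linarith
  -- trace identities
  have htrB := traceEqSum n _ hB
  have htrA := traceEqSum n A hA
  have htr2 : (A + c • Matrix.vecMulVec b b).trace = A.trace + s := by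
    have htrv : Matrix.trace (Matrix.vecMulVec b b) = ∑ j, b j ^ 2 := by
      simp [Matrix.trace, Matrix.diag, Matrix.vecMulVec_apply, pow_two]
    rw [Matrix.trace_add, Matrix.trace_smul, htrv, smul_eq_mul]
  have hsumA : (n : ℝ) * lam ≤ ∑ i, hA.eigenvalues i := by
    calc (n : ℝ) * lam = ∑ _i : Fin n, lam := by
          rw [Finset.sum_const, Finset.card_univ, Fintype.card_fin, nsmul_eq_mul]
      _ ≤ ∑ i, hA.eigenvalues i := Finset.sum_le_sum fun i _ => heig i
  have hsum : (n : ℝ) * lam + s ≤ ∑ i, hB.eigenvalues i := by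
    rw [← htrB, htr2, htrA] at *
    linarith
  -- combinatorics
  set P := (Finset.univ : Finset (Fin n)).powersetCard (m+1) with hP
  set C : ℕ := (n-1).choose m with hC
  have hcount : ∀ i : Fin n, (P.filter (fun S => i ∈ S)).card = C := fun i => filterCard n m i
  set y : Fin n → ℝ := fun i => if (i : ℕ) = n - 1 then lam + s else lam with hy
  have hyS : ∀ S ∈ P, lam * ∏ i ∈ S, y i
      = lam ^ (m+1) * lam + lam ^ (m+1) * (if j0 ∈ S then s else 0) := by
    intro S hS
    obtain ⟨-, hcard⟩ := Finset.mem_powersetCard.mp hS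
    by_cases hj : j0 ∈ S
    · rw [← Finset.mul_prod_erase S _ hj]
      have hco : ∀ i ∈ S.erase j0, y i = lam := by
        intro i hi
        have hne : i ≠ j0 := Finset.ne_of_mem_erase hi
        have hval : (i : ℕ) ≠ n - 1 := by
          intro h
          exact hne (Fin.ext (by simpa [hj0] using h))
        simp [hy, hval]
      rw [Finset.prod_congr rfl hco, Finset.prod_const, Finset.card_erase_of_mem hj, hcard]
      have hyj : y j0 = lam + s := by simp [hy, hj0]
      rw [hyj, if_pos hj]
      have hm1 : m + 1 - 1 = m := rfl
      rw [hm1]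
      ring
    · have hco : ∀ i ∈ S, y i = lam := by
        intro i hi
        have hne : i ≠ j0 := fun h => hj (h ▸ hi)
        have hval : (i : ℕ) ≠ n - 1 := by
          intro h
          exact hne (Fin.ext (by simpa [hj0] using h))
        simp [hy, hval]
      rw [Finset.prod_congr rfl hco, Finset.prod_const, hcard, if_neg hj]
      ring
  have hEy : lam * esymm n (m+1) y
      = P.card * (lam ^ (m+1) * lam) + lam ^ (m+1) * ((C : ℝ) * s) := by
    simp only [esymm]
    rw [Finset.mul_sum, Finset.sum_congr rfl hyS, Finset.sum_add_distrib, Finset.sum_const,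
      ← Finset.mul_sum, nsmul_eq_mul]
    congr 2
    rw [← Finset.sum_filter, Finset.sum_const, hcount j0, nsmul_eq_mul]
  have hEx : (P.card : ℝ) * (lam ^ (m+1) * lam)
      + lam ^ (m+1) * ∑ S ∈ P, (∑ i ∈ S, (hB.eigenvalues i - lam))
      ≤ lam * esymm n (m+1) hB.eigenvalues := by
    have step : (P.card : ℝ) * (lam ^ (m+1) * lam)
        + lam ^ (m+1) * ∑ S ∈ P, (∑ i ∈ S, (hB.eigenvalues i - lam))
        = ∑ S ∈ P, (lam ^ (m+1) * lam + lam ^ (m+1) * ∑ i ∈ S, (hB.eigenvalues i - lam)) := by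
      rw [Finset.sum_add_distrib, Finset.sum_const, ← Finset.mul_sum, nsmul_eq_mul]
    rw [step]
    calc ∑ S ∈ P, (lam ^ (m+1) * lam + lam ^ (m+1) * ∑ i ∈ S, (hB.eigenvalues i - lam))
        ≤ ∑ S ∈ P, lam * ∏ i ∈ S, hB.eigenvalues i := by
          refine Finset.sum_le_sum fun S hS => ?_
          obtain ⟨-, hcard⟩ := Finset.mem_powersetCard.mp hS
          have h := prodLower lam hlam _ hmu S
          rwa [hcard] at h
      _ = lam * esymm n (m+1) hB.eigenvalues := by
          simp only [esymm]
          rw [Finset.mul_sum]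
  have hdouble : ∑ S ∈ P, (∑ i ∈ S, (hB.eigenvalues i - lam))
      = (C : ℝ) * ∑ i, (hB.eigenvalues i - lam) := by
    have h1 : ∀ S : Finset (Fin n), ∑ i ∈ S, (hB.eigenvalues i - lam)
        = ∑ i : Fin n, (if i ∈ S then hB.eigenvalues i - lam else 0) := by
      intro S
      rw [Finset.sum_ite_mem, Finset.univ_inter]
    rw [Finset.sum_congr rfl (fun S _ => h1 S), Finset.sum_comm, Finset.mul_sum]
    refine Finset.sum_congr rfl fun i _ => ?_
    rw [← Finset.sum_filter, Finset.sum_const, hcount i, nsmul_eq_mul]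
  have htsum : s ≤ ∑ i, (hB.eigenvalues i - lam) := by
    rw [Finset.sum_sub_distrib, Finset.sum_const, Finset.card_univ, Fintype.card_fin,
      nsmul_eq_mul]
    linarith
  have final : lam * esymm n (m+1) y ≤ lam * esymm n (m+1) hB.eigenvalues := by
    rw [hEy]
    refine le_trans ?_ hEx
    have h2 : (C : ℝ) * s ≤ ∑ S ∈ P, (∑ i ∈ S, (hB.eigenvalues i - lam)) := by
      rw [hdouble]
      exact mul_le_mul_of_nonneg_left htsum (Nat.cast_nonneg _)
    have h3 := mul_le_mul_of_nonneg_left h2 (pow_nonneg hlam.le (m+1))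
    linarith
  exact le_of_mul_le_mul_left final hlam
end
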